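/- Let X be a smooth proper curve over a perfect field k of characteristic p, D an effective Cartier divisor on X with reduction D_red, and V the Cartier operator (trace of absolute Frobenius) on meromorphic differentials. Then for every positive integer n, the inclusion H^0(X, Ω¹_{X/k}(D_red)) ⊆ H^0(X, Ω¹_{X/k}(nD)) induces an isomorphism on the V-ordinary subspaces (the maximal subspaces on which V acts bijectively). -/

import Mathlib

/-- **control lemma for the Cartier operator.**
Let `X` be a smooth proper curve over a perfect field `k` of characteristic `p`, and `D` an
effective Cartier divisor on `X`.  We encode the divisors supported on the (finite) support `P`
of `D` by their multiplicity functions `c : P → ℕ`, and the spaces of meromorphic differentials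
`H^0(X, Ω¹_{X/k}(Σ c(x)·x))` by an increasing family of finite-dimensional subspaces
`H c` of the ambient `k`-vector space `A` of meromorphic differentials.  The Cartier operator
(trace of absolute Frobenius) `V` is `φ⁻¹`-semilinear (for `φ` the Frobenius of `k`) and
improves poles: `V` maps `H c` into `H ⌈c/p⌉` (coefficientwise ceiling, `⌈a/p⌉ = (a+p−1)/p`).
The divisor `D` has multiplicity `d : P → ℕ` with `d x ≥ 1` on its support, and its reduction
`D_red` has all multiplicities `1`.  Then for every positive integer `n`, the inclusion
`H^0(X, Ω¹(D_red)) ⊆ H^0(X, Ω¹(nD))` induces an isomorphism on the `V`-ordinary subspaces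
(the maximal subspaces on which `V` acts bijectively, namely `⋂_m im(V^m)`): the two ordinary
subspaces coincide. -/
theorem stmt_6 (k : Type*) [Field k] (p : ℕ) [Fact p.Prime] [CharP k p] [PerfectRing k p]
    (A : Type*) [AddCommGroup A] [Module k A]
    (P : Type*) [Fintype P]
    (H : (P → ℕ) → Submodule k A)
    (hmono : Monotone H)
    (hfd : ∀ c : P → ℕ, FiniteDimensional k (H c))
    (V : A →ₛₗ[((frobeniusEquiv k p).symm : k →+* k)] A)
    (hpole : ∀ (c : P → ℕ), ∀ a ∈ H c, V a ∈ H (fun x => (c x + p - 1) / p))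
    (d : P → ℕ) (hd : ∀ x : P, 1 ≤ d x)
    (n : ℕ) (hn : 0 < n) :
    (⋂ m : ℕ, (⇑V)^[m] '' ((H (fun _ => 1) : Set A))) =
      ⋂ m : ℕ, (⇑V)^[m] '' ((H (fun x => n * d x) : Set A)) := by
  classical
  have hp : 2 ≤ p := (Fact.out : p.Prime).two_le
  set f : ℕ → ℕ := fun c => (c + p - 1) / p with hf
  -- iterating f brings any c ≤ m+1 down to ≤ 1 after m steps
  have hiter : ∀ m c, c ≤ m + 1 → f^[m] c ≤ 1 := by
    intro m
    induction m with
    | zero => intro c hc; simpa using hc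
    | succ m ih =>
      intro c hc
      rw [Function.iterate_succ_apply]
      apply ih
      have hmul : m + 2 ≤ p * (m + 1) := by nlinarith
      have : (c + p - 1) / p ≤ m + 1 := by
        rw [Nat.div_le_iff_le_mul_add_pred (by omega)]
        omega
      simpa [hf] using this
  -- V^[m] maps H c into H (f^[m] ∘ c)
  have hVit : ∀ (m : ℕ) (c : P → ℕ), ∀ a ∈ H c, (⇑V)^[m] a ∈ H (fun x => f^[m] (c x)) := by
    intro m
    induction m with
    | zero => intro c a ha; simpa using ha
    | succ m ih =>
      intro c a ha
      rw [Function.iterate_succ_apply]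
      have h1 : V a ∈ H (fun x => f (c x)) := hpole c a ha
      have h2 := ih (fun x => f (c x)) (V a) h1
      have : (fun x => f^[m] (f (c x))) = fun x => f^[m + 1] (c x) := by
        funext x; rw [Function.iterate_succ_apply]
      rwa [this] at h2
  set N : ℕ := Finset.univ.sup (fun x : P => n * d x) with hN
  have hNle : ∀ x : P, n * d x ≤ N := fun x =>
    Finset.le_sup (f := fun x : P => n * d x) (Finset.mem_univ x)
  apply Set.Subset.antisymm
  · refine Set.iInter_mono fun m => Set.image_mono ?_
    exact hmono fun x => Nat.one_le_iff_ne_zero.mpr (Nat.mul_pos hn (hd x)).ne'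
  · intro a ha
    simp only [Set.mem_iInter] at ha ⊢
    intro m
    obtain ⟨b, hb, hab⟩ := ha (m + N)
    refine ⟨(⇑V)^[N] b, ?_, ?_⟩
    · have h1 := hVit N (fun x => n * d x) b hb
      exact hmono (fun x => hiter N (n * d x) (by have := hNle x; omega)) h1
    · rw [← Function.iterate_add_apply]
      exact hab
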